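/- Let C be a small category, D a cosieve in C, and J_D the Grothendieck topology in which a sieve on c is covering iff it contains every morphism from an object of D; write ŷ : C ⥤ Sheaf J_D (Type) for the sheafified Yoneda embedding. Let E and F be Grothendieck topoi, f^* ⊣ f_* an adjunction with f^* : F ⥤ E preserving finite limits and with f_* preserving initial objects (a dominant geometric morphism), and let x^* : Sheaf J_D (Type) ⥤ E preserve finite limits and small colimits. Then for every object c ∉ D, the object f_*(x^*(ŷ(c))) is initial in F. (Key step showing that classifying topoi of essentially algebraic theories with falsum are weakly right Kan injective with respect to dominant geometric morphisms.) -/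
import Mathlib

universe u

open CategoryTheory Limits Opposite

/-- The Grothendieck topology associated to a set of objects `D` of `C`, in which a sieve
on `c` is covering iff it contains every morphism from an object of `D`. -/
def cosieveTopology (C : Type u) [SmallCategory C] (D : Set C) :
    GrothendieckTopology C where
  sieves c := {S | ∀ (d : C) (g : d ⟶ c), d ∈ D → S g}
  top_mem' := fun _ _ _ _ => trivial
  pullback_stable' := fun _ _ S f hS d g hd => hS d (g ≫ f) hd
  transitive' := fun _ S hS R hR d g hd => by
    simpa using hR (hS d g hd) d (𝟙 d) hd

/-- If the empty sieve covers `c`, every sheaf has subsingleton, nonempty sections at `c`. -/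
noncomputable def uniqueSectionsOfBotCover {C : Type u} [SmallCategory C]
    {J : GrothendieckTopology C} (F : Sheaf J (Type u)) {c : C}
    (h : (⊥ : Sieve c) ∈ J c) : Unique (F.val.obj (op c)) := by
  have hs : Presieve.IsSheafFor F.val ((⊥ : Sieve c) : Presieve c) :=
    ((isSheaf_iff_isSheaf_of_type _ _).mp F.cond) _ h
  have hs' := hs (fun _ _ hf => hf.elim) (by tauto)
  have hsub : Subsingleton (F.val.obj (op c)) :=
    ⟨fun a b => hs'.unique (fun _ _ hf => hf.elim) (fun _ _ hf => hf.elim)⟩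
  exact @uniqueOfSubsingleton _ hsub hs'.exists.choose

/-- Classifying topoi of essentially algebraic theories with falsum are weakly right Kan
injective with respect to dominant geometric morphisms (key step): if `D` is a cosieve in
`C`, `f^* ⊣ f_*` a dominant geometric morphism (`f_*` preserves initial objects), and
`x^*` a point of `Sh(C, J_D)` in `E`, then `f_*(x^*(ŷ c))` is initial for every
`c ∉ D`. -/
theorem statement11 {C : Type u} [SmallCategory C] (D : Set C)
    (hD : ∀ {d c : C}, d ∈ D → (d ⟶ c) → c ∈ D)
    {D₁ D₂ : Type u} [SmallCategory D₁] [SmallCategory D₂]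
    (J : GrothendieckTopology D₁) (K : GrothendieckTopology D₂)
    (fstar : Sheaf K (Type u) ⥤ Sheaf J (Type u))
    (fsub : Sheaf J (Type u) ⥤ Sheaf K (Type u))
    (adj : fstar ⊣ fsub) [PreservesFiniteLimits fstar]
    (hdom : ∀ Z : Sheaf J (Type u), IsInitial Z → Nonempty (IsInitial (fsub.obj Z)))
    (xstar : Sheaf (cosieveTopology C D) (Type u) ⥤ Sheaf J (Type u))
    [PreservesFiniteLimits xstar] [PreservesColimitsOfSize.{u, u} xstar]
    (c : C) (hc : c ∉ D) :
    Nonempty (IsInitial (fsub.obj (xstar.obj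
      ((presheafToSheaf (cosieveTopology C D) (Type u)).obj (yoneda.obj c))))) := by
  have hbot : (⊥ : Sieve c) ∈ cosieveTopology C D c := by
    intro d g hd
    exact absurd (hD hd g) hc
  have hinit : IsInitial ((presheafToSheaf (cosieveTopology C D) (Type u)).obj
      (yoneda.obj c)) := by
    refine IsInitial.ofUniqueHom (fun F => ?_) (fun F m => ?_)
    · exact ((sheafificationAdjunction (cosieveTopology C D) (Type u)).homEquiv _ _).symm
        (yonedaEquiv.symm (uniqueSectionsOfBotCover F hbot).default)
    · rw [Equiv.eq_symm_apply]
      apply yonedaEquiv.injective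
      haveI := uniqueSectionsOfBotCover F hbot
      exact Subsingleton.elim (α := F.val.obj (op c)) _ _
  exact hdom _ (hinit.isInitialObj xstar _)
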